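/- Let L be a Lie ring, I an ideal of L, and h a subring of L. If h is abnormal in the subring h + I and the subring h + I is abnormal in L, then h is abnormal in L. -/
import Mathlib


/-- A subring `a` of a Lie ring `g` is abnormal in a subring `k ⊇ a` if every subring `u`
with `a ⊆ u ⊆ k` satisfies `N_k(u) = u`. -/
def IsAbnormalIn {g : Type*} [LieRing g] (a k : LieSubalgebra ℤ g) : Prop :=
  ∀ u : LieSubalgebra ℤ g, a ≤ u → u ≤ k →
    ∀ y ∈ k, (∀ v ∈ u, ⁅y, v⁆ ∈ u) → y ∈ u

/-- A subring `a` of a Lie ring `g` is abnormal if every subring `u ⊇ a` is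
self-normalizing. -/
def IsAbnormal {g : Type*} [LieRing g] (a : LieSubalgebra ℤ g) : Prop :=
  ∀ u : LieSubalgebra ℤ g, a ≤ u → u.normalizer = u

/-- The sum `u + I` of a subalgebra and an ideal, as a subalgebra. -/
def sumWithIdeal {L : Type*} [LieRing L] (u : LieSubalgebra ℤ L) (I : LieIdeal ℤ L) :
    LieSubalgebra ℤ L where
  carrier := {x : L | ∃ a ∈ u, ∃ b ∈ I, x = a + b}
  add_mem' := by
    rintro x y ⟨a, ha, b, hb, rfl⟩ ⟨a', ha', b', hb', rfl⟩
    exact ⟨a + a', u.add_mem ha ha', b + b', I.add_mem hb hb', by abel⟩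
  zero_mem' := ⟨0, u.zero_mem, 0, I.zero_mem, by simp⟩
  smul_mem' := by
    rintro c x ⟨a, ha, b, hb, rfl⟩
    exact ⟨c • a, u.smul_mem c ha, c • b, I.smul_mem c hb, by rw [smul_add]⟩
  lie_mem' := by
    rintro x y ⟨a, ha, b, hb, rfl⟩ ⟨a', ha', b', hb', rfl⟩
    refine ⟨⁅a, a'⁆, u.lie_mem ha ha', ⁅a, b'⁆ + ⁅b, a' + b'⁆,
      I.add_mem (I.lie_mem hb') ?_, by rw [add_lie, lie_add]; abel⟩
    · have : (⁅b, a' + b'⁆ : L) = -⁅a' + b', b⁆ := by rw [← lie_skew]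
      rw [this]
      exact I.neg_mem (I.lie_mem hb)

theorem mem_sumWithIdeal {L : Type*} [LieRing L] {u : LieSubalgebra ℤ L} {I : LieIdeal ℤ L}
    {x : L} : x ∈ sumWithIdeal u I ↔ ∃ a ∈ u, ∃ b ∈ I, x = a + b := Iff.rfl

/-- Let `L` be a Lie ring, `I` an ideal of `L`, and `h` a subring of `L`.
If `h` is abnormal in the subring `h + I` and `h + I` is abnormal in `L`, then `h` is
abnormal in `L`. -/
theorem stmt_11 {L : Type*} [LieRing L] (I : LieIdeal ℤ L) (h k : LieSubalgebra ℤ L)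
    (hk : (k : Set L) = {x : L | ∃ a ∈ h, ∃ b ∈ I, x = a + b})
    (h1 : IsAbnormalIn h k)
    (h2 : IsAbnormal k) :
    IsAbnormal h := by
  have memk : ∀ x : L, x ∈ k ↔ ∃ a ∈ h, ∃ b ∈ I, x = a + b := by
    intro x
    constructor
    · intro hx; exact (Set.ext_iff.mp hk x).1 hx
    · intro hx; exact (Set.ext_iff.mp hk x).2 hx
  intro u hu
  apply le_antisymm _ u.le_normalizer
  intro y hy
  rw [LieSubalgebra.mem_normalizer_iff] at hy
  -- W = u + I
  set W := sumWithIdeal u I with hW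
  have hkW : k ≤ W := by
    intro x hx
    obtain ⟨a, ha, b, hb, rfl⟩ := (memk x).1 hx
    exact ⟨a, hu ha, b, hb, rfl⟩
  have huW : u ≤ W := fun x hx => ⟨x, hx, 0, I.zero_mem, by simp⟩
  have hyW : y ∈ W := by
    rw [← h2 W hkW]
    rw [LieSubalgebra.mem_normalizer_iff]
    rintro v ⟨a, ha, b, hb, rfl⟩
    exact ⟨⁅y, a⁆, hy a ha, ⁅y, b⁆, I.lie_mem hb, by rw [lie_add]⟩
  obtain ⟨u0, hu0, b, hb, rfl⟩ := hyW
  have hbk : b ∈ k := (memk b).2 ⟨0, h.zero_mem, b, hb, by simp⟩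
  have hbn : ∀ v ∈ u, ⁅b, v⁆ ∈ u := by
    intro v hv
    have : (⁅b, v⁆ : L) = ⁅u0 + b, v⁆ - ⁅u0, v⁆ := by rw [add_lie]; abel
    rw [this]
    exact u.sub_mem (hy v hv) (u.lie_mem hu0 hv)
  have hhk : h ≤ k := fun a ha => (memk a).2 ⟨a, ha, 0, I.zero_mem, by simp⟩
  have hbu : b ∈ u ⊓ k := by
    refine h1 (u ⊓ k) (le_inf hu hhk) inf_le_right b hbk ?_
    rintro v ⟨hv1, hv2⟩
    exact ⟨hbn v hv1, k.lie_mem hbk hv2⟩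
  exact u.add_mem hu0 hbu.1
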